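/- arXiv:2304.07211 — 3 statements merged into one kernel-verified Lean document; each statement's English description precedes it below -/
import Mathlib

section
/- For every finite sequence σ of natural numbers there is a finite sequence of commutations transforming σ into a sequence σ' that is in sawtooth form; in particular σ' is a rearrangement of σ, so for every natural number m the number of entries of σ' equal to m equals the number of entries of σ equal to m. -/
/-- A finite sequence of natural numbers is in sawtooth form if whenever an entry is
less than the next entry, the next entry exceeds it by exactly one. -/
def Sawtooth (l : List ℕ) : Prop :=
  l.Chain' fun a b => a < b → b = a + 1

/-- A single commutation: interchange two adjacent entries `a`, `b` with `|a - b| ≥ 2`. -/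
def CommutationStep (l l' : List ℕ) : Prop :=
  ∃ (p q : List ℕ) (a b : ℕ), (a + 2 ≤ b ∨ b + 2 ≤ a) ∧
    l = p ++ a :: b :: q ∧ l' = p ++ b :: a :: q

/-- Inversion-type measure: number of pairs i < j with l_i < l_j. -/
def fmeas : List ℕ → ℕ
  | [] => 0
  | a :: l => l.countP (fun b => a < b) + fmeas l

lemma fmeas_cons (a : ℕ) (l : List ℕ) :
    fmeas (a :: l) = l.countP (fun b => a < b) + fmeas l := rfl

lemma fmeas_append_perm (p : List ℕ) {t t' : List ℕ} (h : t.Perm t') :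
    fmeas (p ++ t) + fmeas t' = fmeas (p ++ t') + fmeas t := by
  induction p with
  | nil => simp [Nat.add_comm]
  | cons c p ih =>
    rw [List.cons_append, List.cons_append, fmeas_cons, fmeas_cons]
    have hc : (p ++ t).countP (fun b => c < b) = (p ++ t').countP (fun b => c < b) := by
      simp [List.countP_append, h.countP_eq]
    omega

lemma fmeas_swap (p q : List ℕ) (a b : ℕ) (h : a < b) :
    fmeas (p ++ b :: a :: q) + 1 = fmeas (p ++ a :: b :: q) := by
  have hperm : (a :: b :: q).Perm (b :: a :: q) := List.Perm.swap b a q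
  have hm := fmeas_append_perm p hperm
  have h1 : decide (a < b) = true := by simpa using h
  have h2 : decide (b < a) = false := by simp; omega
  rw [fmeas_cons, fmeas_cons, fmeas_cons, fmeas_cons, List.countP_cons, List.countP_cons,
    h1, h2] at hm
  simp at hm
  omega

lemma not_sawtooth_decomp : ∀ (l : List ℕ), ¬ Sawtooth l →
    ∃ p a b q, l = p ++ a :: b :: q ∧ a + 2 ≤ b := by
  intro l
  induction l with
  | nil => intro h; exact absurd List.isChain_nil h
  | cons a l ih =>
    intro h
    match l, ih with
    | [], _ => exact absurd (List.isChain_singleton a) h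
    | b :: q, ih =>
      rw [Sawtooth, List.Chain', List.isChain_cons_cons] at h
      by_cases hab : a < b → b = a + 1
      · obtain ⟨p, a', b', q', hq, hle⟩ := ih (fun hs => h ⟨hab, hs⟩)
        exact ⟨a :: p, a', b', q', by simp [hq], hle⟩
      · push_neg at hab
        exact ⟨[], a, b, q, by simp, by omega⟩

lemma main_aux : ∀ (n : ℕ) (σ : List ℕ), fmeas σ ≤ n →
    ∃ σ', Relation.ReflTransGen CommutationStep σ σ' ∧ Sawtooth σ' ∧ σ'.Perm σ := by
  intro n
  induction n with
  | zero =>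
    intro σ hσ
    by_cases hs : Sawtooth σ
    · exact ⟨σ, Relation.ReflTransGen.refl, hs, List.Perm.refl σ⟩
    · obtain ⟨p, a, b, q, rfl, hle⟩ := not_sawtooth_decomp σ hs
      have := fmeas_swap p q a b (by omega)
      omega
  | succ n ih =>
    intro σ hσ
    by_cases hs : Sawtooth σ
    · exact ⟨σ, Relation.ReflTransGen.refl, hs, List.Perm.refl σ⟩
    · obtain ⟨p, a, b, q, rfl, hle⟩ := not_sawtooth_decomp σ hs
      have hm := fmeas_swap p q a b (by omega)
      have hlt : fmeas (p ++ b :: a :: q) ≤ n := by omega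
      obtain ⟨σ', hsteps, hsaw, hpermσ⟩ := ih _ hlt
      refine ⟨σ', Relation.ReflTransGen.head ⟨p, q, a, b, Or.inl hle, rfl, rfl⟩ hsteps,
        hsaw, hpermσ.trans ?_⟩
      exact ((List.Perm.swap b a q).append_left p).symm

/-- Every finite sequence of natural numbers can be transformed by a finite sequence of
commutations into a sequence in sawtooth form; the result is a rearrangement of the
original, so every natural number occurs in it with the same multiplicity. -/
theorem exists_sawtooth_of_commutations (σ : List ℕ) :
    ∃ σ' : List ℕ, Relation.ReflTransGen CommutationStep σ σ' ∧ Sawtooth σ' ∧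
      ∀ m : ℕ, σ'.count m = σ.count m := by
  obtain ⟨σ', h1, h2, h3⟩ := main_aux (fmeas σ) σ le_rfl
  exact ⟨σ', h1, h2, fun m => h3.count_eq m⟩
end

section
/- Suppose σ : {1, …, N} → ℕ is in sawtooth form and its dot graph G(σ) contains an empty, unpierced box whose two defining ascending segments occupy the index intervals [a, a+m] and [b, b+m] (with a+m < b) and both rise from height k to height k+m. Then every index i with a+m < i < b satisfies σ(i) < k or σ(i) > k+m. Consequently, listing in order of index the entries of σ with indices in [a, b+m] and values in {k, …, k+m} yields exactly the sequence k, k+1, …, k+m, k, k+1, …, k+m. -/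
/-- `σ : {1, …, N} → ℕ` is in sawtooth form: whenever an entry is less than the next
one, the next one exceeds it by exactly one. -/
def SawtoothOn (N : ℕ) (σ : ℕ → ℕ) : Prop :=
  ∀ i, 1 ≤ i → i + 1 ≤ N → σ i < σ (i + 1) → σ (i + 1) = σ i + 1

/-- The dots at indices `s, s+1, …, s+r` form a (maximal) ascending segment of the dot
graph `G(σ)`: `σ (s+t) = σ s + t` for `0 ≤ t ≤ r`, and this cannot be extended on
either side. -/
def IsAscSeg (N : ℕ) (σ : ℕ → ℕ) (s r : ℕ) : Prop :=
  1 ≤ s ∧ s + r ≤ N ∧ (∀ t ≤ r, σ (s + t) = σ s + t) ∧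
    (1 < s → σ s ≠ σ (s - 1) + 1) ∧ (s + r + 1 ≤ N → σ (s + r + 1) ≠ σ (s + r) + 1)

/-- The point `(i, y)` lies in the closed parallelogram bounded by the two ascending
segments rising from `(a, k)` to `(a+m, k+m)` and from `(b, k)` to `(b+m, k+m)`,
together with the two horizontal edges joining them. -/
def InBoxRegion (a b k m i y : ℕ) : Prop :=
  k ≤ y ∧ y ≤ k + m ∧ a + (y - k) ≤ i ∧ i ≤ b + (y - k)

/-- The ascending segment at indices `[s, s+r]` crosses the horizontal edge at height
`h` with endpoints at `x`-coordinates `xl < xr`: it has a dot strictly below height `h`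
and a dot at or above height `h`, and its slope-one line meets height `h` at an
`x`-coordinate strictly between `xl` and `xr`. -/
def SegCrossesEdge (σ : ℕ → ℕ) (s r h xl xr : ℕ) : Prop :=
  σ s < h ∧ h ≤ σ (s + r) ∧ xl < s + (h - σ s) ∧ s + (h - σ s) < xr

private lemma map_range'_seg (σ : ℕ → ℕ) (s k m : ℕ) (h : ∀ t ≤ m, σ (s+t) = k + t) :
    (List.range' s (m+1)).map σ = List.range' k (m+1) := by
  apply List.ext_getElem
  · simp
  intro i h1 h2
  simp only [List.getElem_map, List.getElem_range', Nat.one_mul]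
  simp only [List.length_map, List.length_range'] at h1
  exact h i (by omega)

private lemma range'_split (a b m : ℕ) (h : a + m < b) :
    List.range' a (b+m+1-a) = List.range' a (m+1) ++ List.range' (a+m+1) (b-(a+m+1)) ++ List.range' b (m+1) := by
  rw [List.append_assoc]
  calc List.range' a (b+m+1-a)
      = List.range' a (((m+1)+(b-(a+m+1)))+(m+1)) := by congr 1; omega
    _ = List.range' a (m+1) ++ List.range' (a+1*(m+1)) ((m+1)+(b-(a+m+1))) :=
        by rw [List.range'_append]; congr 1; omega
    _ = List.range' a (m+1) ++ List.range' (a+m+1) ((m+1)+(b-(a+m+1))) := by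
        congr 2; omega
    _ = List.range' a (m+1) ++ (List.range' (a+m+1) (b-(a+m+1)) ++ List.range' ((a+m+1)+1*(b-(a+m+1))) (m+1)) := by
        rw [List.range'_append, Nat.add_comm (m+1)]
    _ = _ := by congr 3; omega

/-- If the dot graph of a sawtooth-form sequence `σ` contains an empty, unpierced box
with defining ascending segments at index intervals `[a, a+m]` and `[b, b+m]` (with
`a + m < b`), both rising from height `k` to height `k+m`, then every index strictly
between `a+m` and `b` carries a value outside `[k, k+m]`, and the entries of `σ` with
index in `[a, b+m]` and value in `[k, k+m]`, read in order of index, are exactly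
`k, k+1, …, k+m, k, k+1, …, k+m`. -/
theorem box_intersection_pattern (N : ℕ) (σ : ℕ → ℕ) (a b k m : ℕ)
    (hsaw : SawtoothOn N σ)
    (hm : 1 ≤ m) (hab : a + m < b)
    (hleft : IsAscSeg N σ a m) (hright : IsAscSeg N σ b m)
    (hka : σ a = k) (hkb : σ b = k)
    (hempty : ∀ i, 1 ≤ i → i ≤ N → ¬ (a ≤ i ∧ i ≤ a + m) → ¬ (b ≤ i ∧ i ≤ b + m) →
      ¬ InBoxRegion a b k m i (σ i))
    (hunpierced : ∀ s r, IsAscSeg N σ s r →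
      ¬ SegCrossesEdge σ s r k a b ∧ ¬ SegCrossesEdge σ s r (k + m) (a + m) (b + m)) :
    (∀ i, a + m < i → i < b → σ i < k ∨ k + m < σ i) ∧
    ((List.range' a (b + m + 1 - a)).filter
        (fun i => decide (k ≤ σ i ∧ σ i ≤ k + m))).map σ =
      List.range' k (m + 1) ++ List.range' k (m + 1) := by
  obtain ⟨ha1, ha2, hA, -, -⟩ := hleft
  obtain ⟨hb1, hb2, hB, -, -⟩ := hright
  have hAv : ∀ t ≤ m, σ (a + t) = k + t := fun t ht => by rw [hA t ht, hka]
  have hBv : ∀ t ≤ m, σ (b + t) = k + t := fun t ht => by rw [hB t ht, hkb]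
  have key : ∀ i, a + m < i → i < b → σ i < k ∨ k + m < σ i := by
    intro i hi1 hi2
    by_contra hc
    push_neg at hc
    obtain ⟨hc1, hc2⟩ := hc
    exact hempty i (by omega) (by omega) (by omega) (by omega)
      ⟨hc1, hc2, by omega, by omega⟩
  refine ⟨key, ?_⟩
  rw [range'_split a b m hab, List.filter_append, List.filter_append]
  have f1 : (List.range' a (m+1)).filter (fun i => decide (k ≤ σ i ∧ σ i ≤ k + m))
      = List.range' a (m+1) := by
    rw [List.filter_eq_self]
    intro x hx
    rw [List.mem_range'_1] at hx
    have := hAv (x - a) (by omega)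
    rw [show a + (x - a) = x by omega] at this
    simp only [decide_eq_true_eq]
    omega
  have f2 : (List.range' (a+m+1) (b-(a+m+1))).filter (fun i => decide (k ≤ σ i ∧ σ i ≤ k + m))
      = [] := by
    rw [List.filter_eq_nil_iff]
    intro x hx
    rw [List.mem_range'_1] at hx
    have := key x (by omega) (by omega)
    simp only [decide_eq_true_eq]
    omega
  have f3 : (List.range' b (m+1)).filter (fun i => decide (k ≤ σ i ∧ σ i ≤ k + m))
      = List.range' b (m+1) := by
    rw [List.filter_eq_self]
    intro x hx
    rw [List.mem_range'_1] at hx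
    have := hBv (x - b) (by omega)
    rw [show b + (x - b) = x by omega] at this
    simp only [decide_eq_true_eq]
    omega
  rw [f1, f2, f3, List.append_nil, List.map_append,
    map_range'_seg σ a k m hAv, map_range'_seg σ b k m hBv]
end

section
/- Suppose σ : {1, …, N} → ℕ is in sawtooth form and its dot graph G(σ) contains an empty, unpierced hexagon of type 1 with leftmost defining segment at indices [a, a+m] rising from height k to k+m, middle defining segment at indices [b, b+l] rising from height k to k+l, and rightmost defining segment at indices [c, c+m−l] rising from height k+l to k+m (with a+m < b, b+l < c, 0 < l < m). Then every index i with a+m < i < b satisfies σ(i) < k or σ(i) > k+m, and every index i with b+l < i < c satisfies σ(i) < k+l. Consequently the dots of σ with indices in [a, c+m−l] and values in {k, …, k+m}, other than entries of value less than k+l lying at indices strictly between b+l and c, read in order: k, k+1, …, k+m, k, k+1, …, k+l, k+l, k+l+1, …, k+m. -/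
/-- The point `(i, y)` lies in the closed hexagonal region bounded by the leftmost
ascending segment from `(a, k)` to `(a+m, k+m)`, the middle ascending segment from
`(b, k)` to `(b+l, k+l)`, the rightmost ascending segment from `(c, k+l)` to
`(c+m-l, k+m)`, and the three horizontal edges joining `(a, k)` to `(b, k)`,
`(b+l, k+l)` to `(c, k+l)`, and `(a+m, k+m)` to `(c+m-l, k+m)`. -/
def InHexRegion (a b c k l m i y : ℕ) : Prop :=
  (k ≤ y ∧ y ≤ k + l ∧ a + (y - k) ≤ i ∧ i ≤ b + (y - k)) ∨
  (k + l ≤ y ∧ y ≤ k + m ∧ a + (y - k) ≤ i ∧ i ≤ c + (y - (k + l)))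

/-- If the dot graph of a sawtooth-form sequence `σ` contains an empty, unpierced
hexagon of type 1, with leftmost defining segment at indices `[a, a+m]` rising from
height `k` to `k+m`, middle defining segment at indices `[b, b+l]` rising from `k` to
`k+l`, and rightmost defining segment at indices `[c, c+m-l]` rising from `k+l` to
`k+m` (where `a+m < b`, `b+l < c`, `0 < l < m`), then every index strictly between
`a+m` and `b` carries a value outside `[k, k+m]`, every index strictly between `b+l`
and `c` carries a value below `k+l`, and the entries of `σ` with index in `[a, c+m-l]`
and value in `[k, k+m]`, other than those of value below `k+l` at indices strictly
between `b+l` and `c`, read in order of index, are exactly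
`k, …, k+m, k, …, k+l, k+l, …, k+m`. -/
theorem hexagon_intersection_pattern (N : ℕ) (σ : ℕ → ℕ) (a b c k l m : ℕ)
    (hsaw : SawtoothOn N σ)
    (hl : 0 < l) (hlm : l < m) (hab : a + m < b) (hbc : b + l < c)
    (hleft : IsAscSeg N σ a m) (hmid : IsAscSeg N σ b l)
    (hright : IsAscSeg N σ c (m - l))
    (hka : σ a = k) (hkb : σ b = k) (hkc : σ c = k + l)
    (hempty : ∀ i, 1 ≤ i → i ≤ N → ¬ (a ≤ i ∧ i ≤ a + m) → ¬ (b ≤ i ∧ i ≤ b + l) →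
      ¬ (c ≤ i ∧ i ≤ c + (m - l)) → ¬ InHexRegion a b c k l m i (σ i))
    (hunpierced : ∀ s r, IsAscSeg N σ s r →
      ¬ SegCrossesEdge σ s r k a b ∧ ¬ SegCrossesEdge σ s r (k + l) (b + l) c ∧
      ¬ SegCrossesEdge σ s r (k + m) (a + m) (c + (m - l))) :
    (∀ i, a + m < i → i < b → σ i < k ∨ k + m < σ i) ∧
    (∀ i, b + l < i → i < c → σ i < k + l) ∧
    ((List.range' a (c + (m - l) + 1 - a)).filter
        (fun i => decide ((k ≤ σ i ∧ σ i ≤ k + m) ∧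
          ¬ (b + l < i ∧ i < c ∧ σ i < k + l)))).map σ =
      List.range' k (m + 1) ++ List.range' k (l + 1) ++
        List.range' (k + l) (m - l + 1) := by

  obtain ⟨ha1, haN, hseg_a, hamax1, hamax2⟩ := hleft
  obtain ⟨hb1, hbN, hseg_b, hbmax1, hbmax2⟩ := hmid
  obtain ⟨hc1, hcN, hseg_c, hcmax1, hcmax2⟩ := hright
  have hva : ∀ t, t ≤ m → σ (a + t) = k + t := by
    intro t ht; have := hseg_a t ht; omega
  have hvb : ∀ t, t ≤ l → σ (b + t) = k + t := by
    intro t ht; have := hseg_b t ht; omega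
  have hvc : ∀ t, t ≤ m - l → σ (c + t) = k + l + t := by
    intro t ht; have := hseg_c t ht; omega
  have claim1 : ∀ i, a + m < i → i < b → σ i < k ∨ k + m < σ i := by
    intro i h1 h2
    by_contra h
    push_neg at h
    exact hempty i (by omega) (by omega) (by omega) (by omega) (by omega)
      (by simp only [InHexRegion]; omega)
  have hbl : σ (b + l) = k + l := hvb l le_rfl
  have claim2 : ∀ i, b + l < i → i < c → σ i < k + l := by
    intro i
    induction i using Nat.strong_induction_on with
    | _ i ih =>
      intro h1 h2
      by_contra h
      push_neg at h
      rcases le_or_gt (σ i) (k + m) with hle | hgt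
      · exact hempty i (by omega) (by omega) (by omega) (by omega) (by omega)
          (by simp only [InHexRegion]; omega)
      · -- σ i > k + m; look at i - 1
        have hiN : i ≤ N := by omega
        have key : k + m ≤ σ (i - 1) := by
          rcases lt_or_ge (σ (i - 1)) (σ i) with hlt | hge
          · have heq : i - 1 + 1 = i := by omega
            have := hsaw (i - 1) (by omega) (by omega)
            rw [heq] at this
            have := this hlt
            omega
          · omega
        have hne : i - 1 ≠ b + l := by
          intro heq
          rw [heq] at key
          omega
        rcases eq_or_lt_of_le key with heq | hlt
        · exact hempty (i - 1) (by omega) (by omega) (by omega) (by omega) (by omega)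
            (by simp only [InHexRegion]; omega)
        · have := ih (i - 1) (by omega) (by omega) (by omega)
          omega
  refine ⟨claim1, claim2, ?_⟩
  have maplem : ∀ s v n, (∀ t, t ≤ n → σ (s + t) = v + t) →
      (List.range' s (n + 1)).map σ = List.range' v (n + 1) := by
    intro s v n h
    apply List.ext_getElem
    · simp
    · intro j h1 h2
      simp only [List.getElem_map, List.getElem_range', Nat.one_mul]
      rw [List.length_map, List.length_range'] at h1
      exact h j (by omega)
  set p : ℕ → Bool := fun i => decide ((k ≤ σ i ∧ σ i ≤ k + m) ∧
      ¬ (b + l < i ∧ i < c ∧ σ i < k + l)) with hp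
  have splitlem : ∀ s n n1 s2 n2, n = n1 + n2 → s2 = s + n1 →
      List.range' s n = List.range' s n1 ++ List.range' s2 n2 := by
    intro s n n1 s2 n2 h1 h2
    have := List.range'_append (s := s) (m := n1) (n := n2) (step := 1)
    simp only [Nat.one_mul] at this
    rw [h1, h2, ← this]
  have hsplit : List.range' a (c + (m - l) + 1 - a) =
      List.range' a (m + 1) ++ List.range' (a + m + 1) (b - (a + m + 1)) ++
      List.range' b (l + 1) ++ List.range' (b + l + 1) (c - (b + l + 1)) ++
      List.range' c (m - l + 1) := by
    rw [splitlem a (c + (m - l) + 1 - a) (m + 1) (a + m + 1)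
        (c + (m - l) + 1 - (a + m + 1)) (by omega) (by omega)]
    rw [splitlem (a + m + 1) (c + (m - l) + 1 - (a + m + 1)) (b - (a + m + 1)) b
        (c + (m - l) + 1 - b) (by omega) (by omega)]
    rw [splitlem b (c + (m - l) + 1 - b) (l + 1) (b + l + 1)
        (c + (m - l) + 1 - (b + l + 1)) (by omega) (by omega)]
    rw [splitlem (b + l + 1) (c + (m - l) + 1 - (b + l + 1)) (c - (b + l + 1)) c
        (m - l + 1) (by omega) (by omega)]
    simp [List.append_assoc]
  have f1 : (List.range' a (m + 1)).filter p = List.range' a (m + 1) := by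
    rw [List.filter_eq_self]
    intro i hi
    rw [List.mem_range'_1] at hi
    have := hva (i - a) (by omega)
    rw [show a + (i - a) = i by omega] at this
    simp only [hp, decide_eq_true_eq]
    omega
  have f2 : (List.range' (a + m + 1) (b - (a + m + 1))).filter p = [] := by
    rw [List.filter_eq_nil_iff]
    intro i hi
    rw [List.mem_range'_1] at hi
    have := claim1 i (by omega) (by omega)
    simp only [hp, decide_eq_true_eq]
    omega
  have f3 : (List.range' b (l + 1)).filter p = List.range' b (l + 1) := by
    rw [List.filter_eq_self]
    intro i hi
    rw [List.mem_range'_1] at hi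
    have := hvb (i - b) (by omega)
    rw [show b + (i - b) = i by omega] at this
    simp only [hp, decide_eq_true_eq]
    omega
  have f4 : (List.range' (b + l + 1) (c - (b + l + 1))).filter p = [] := by
    rw [List.filter_eq_nil_iff]
    intro i hi
    rw [List.mem_range'_1] at hi
    have := claim2 i (by omega) (by omega)
    simp only [hp, decide_eq_true_eq]
    omega
  have f5 : (List.range' c (m - l + 1)).filter p = List.range' c (m - l + 1) := by
    rw [List.filter_eq_self]
    intro i hi
    rw [List.mem_range'_1] at hi
    have := hvc (i - c) (by omega)
    rw [show c + (i - c) = i by omega] at this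
    simp only [hp, decide_eq_true_eq]
    omega
  rw [hsplit, List.filter_append, List.filter_append, List.filter_append,
    List.filter_append, f1, f2, f3, f4, f5]
  simp only [List.append_nil, List.map_append]
  rw [maplem a k m hva, maplem b k l hvb, maplem c (k + l) (m - l) hvc]
end
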